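/- If N is a b-wARH number with k base-b digits and additive extra term A ≥ b^3, then k ≤ 2·⌊log_b A⌋. -/

import Mathlib

/-- Sum of the base-`b` digits of `N`. -/
def sumDigits (b N : ℕ) : ℕ := (Nat.digits b N).sum

/-- The base-`b` reversal of `N`. -/
def revDigits (b N : ℕ) : ℕ := Nat.ofDigits b (Nat.digits b N).reverse

/-- `N` is a `b`-wARH number with additive extra term `A`. -/
def IsWARHWith (b N A : ℕ) : Prop :=
  N = (A + sumDigits b N) + revDigits b (A + sumDigits b N)

lemma aux_k_lt_pow (b : ℕ) (hb : 2 ≤ b) : ∀ k, 7 ≤ k → k < b ^ (k - 4) := by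
  intro k hk
  induction k with
  | zero => omega
  | succ n ih =>
    rcases Nat.lt_or_ge n 7 with hn | hn
    · have hn6 : n = 6 := by omega
      subst hn6
      have : (2:ℕ) ^ 3 ≤ b ^ 3 := Nat.pow_le_pow_left hb 3
      simpa using by omega
    · have h1 := ih (by omega)
      have h2 : b ^ (n - 4) + b ^ (n - 4) ≤ b ^ (n + 1 - 4) := by
        have he : n + 1 - 4 = (n - 4) + 1 := by omega
        rw [he, pow_succ]
        nlinarith [pow_pos (show 0 < b by omega) (n - 4)]
      omega

set_option maxHeartbeats 1000000 in
theorem wARH_digit_bound_large_A (b N A : ℕ) (hb : 2 ≤ b) (hA : b ^ 3 ≤ A)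
    (h : IsWARHWith b N A) :
    (Nat.digits b N).length ≤ 2 * Nat.log b A := by
  have hb1 : 1 < b := hb
  set s := sumDigits b N with hs
  set M := A + s with hM
  have hA0 : 0 < A := lt_of_lt_of_le (Nat.pow_pos (n := 3) (by omega)) hA
  have hM0 : 0 < M := by omega
  have hN : N = M + revDigits b M := h
  have hN0 : 0 < N := by omega
  set L := Nat.log b A with hL
  have hL3 : 3 ≤ L := (Nat.le_log_iff_pow_le hb1 hA0.ne').mpr hA
  have hAlt : A < b ^ (L + 1) := Nat.lt_pow_succ_log_self hb1 A
  set k := (Nat.digits b N).length with hk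
  -- digit sum bound
  have hsk : s ≤ (b - 1) * k := by
    have := List.sum_le_card_nsmul (Nat.digits b N) (b - 1)
      (fun x hx => by have := Nat.digits_lt_base hb1 hx; omega)
    simpa [hs, sumDigits, hk, mul_comm] using this
  -- rev M < b ^ len M
  have hrev : revDigits b M < b ^ (Nat.digits b M).length := by
    have : revDigits b M < b ^ (Nat.digits b M).reverse.length :=
      Nat.ofDigits_lt_base_pow_length hb1 (fun x hx => Nat.digits_lt_base hb1 (List.mem_reverse.mp hx))
    simpa using this
  have hMlt : M < b ^ (Nat.digits b M).length := Nat.lt_base_pow_length_digits hb1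
  have hNlt : N < b ^ ((Nat.digits b M).length + 1) := by
    have h2 : M + revDigits b M < 2 * b ^ (Nat.digits b M).length := by omega
    calc N < 2 * b ^ (Nat.digits b M).length := by omega
    _ ≤ b * b ^ (Nat.digits b M).length := Nat.mul_le_mul_right _ hb
    _ = b ^ ((Nat.digits b M).length + 1) := by ring
  have hkM : k ≤ (Nat.digits b M).length + 1 := by
    rw [hk, Nat.digits_len b N hb1 hN0.ne']
    have : Nat.log b N ≤ (Nat.digits b M).length := by
      rcases Nat.eq_zero_or_pos (Nat.log b N) with h0 | h0
      · omega
      have := Nat.pow_log_le_self b hN0.ne'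
      by_contra hc
      push_neg at hc
      have : b ^ ((Nat.digits b M).length + 1) ≤ b ^ Nat.log b N :=
        Nat.pow_le_pow_right (by omega) (by omega)
      omega
    omega
  have hMlen : (Nat.digits b M).length = Nat.log b M + 1 := Nat.digits_len b M hb1 hM0.ne'
  by_contra hc
  push_neg at hc
  have hk7 : 2 * L + 1 ≤ k := by omega
  have hk2 : k - 2 ≤ Nat.log b M := by omega
  have hMge : b ^ (k - 2) ≤ M :=
    le_trans (Nat.pow_le_pow_right (by omega) hk2) (Nat.pow_log_le_self b hM0.ne')
  -- now contradiction: b^(k-2) ≤ A + s < b^(L+1) + (b-1)*k < b^(k-2)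
  have hklarge : 7 ≤ k := by omega
  have hkpow : k < b ^ (k - 4) := aux_k_lt_pow b hb k hklarge
  have h1 : (b - 1) * k < b ^ (k - 3) := by
    have hp : b ^ (k - 3) = b * b ^ (k - 4) := by
      rw [← pow_succ']; congr 1; omega
    have hmul : b * (k + 1) ≤ b * b ^ (k - 4) := Nat.mul_le_mul_left b (by omega)
    have hb1k : (b - 1) * k < b * (k + 1) := by
      have : (b - 1) * k ≤ b * k := Nat.mul_le_mul_right k (by omega)
      nlinarith
    omega
  have h2 : b ^ (L + 1) + b ^ (k - 3) ≤ b ^ (k - 2) := by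
    have e1 : b ^ (L + 1) ≤ b ^ (k - 3) := Nat.pow_le_pow_right (by omega) (by omega)
    have e2 : b ^ (k - 3) + b ^ (k - 3) ≤ b ^ (k - 2) := by
      have : k - 2 = (k - 3) + 1 := by omega
      rw [this, pow_succ]
      nlinarith [pow_pos (show 0 < b by omega) (k - 3)]
    omega
  have hfinal : b ^ (k - 2) < b ^ (k - 2) :=
    calc b ^ (k - 2) ≤ M := hMge
    _ = A + s := hM
    _ ≤ A + (b - 1) * k := Nat.add_le_add_left hsk A
    _ < b ^ (L + 1) + b ^ (k - 3) := Nat.add_lt_add hAlt h1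
    _ ≤ b ^ (k - 2) := h2
  exact absurd hfinal (lt_irrefl _)
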